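/- Let K be a field of characteristic ≠ 2 and S = K[a,b,c,d,x,y,z,t] the polynomial ring in 8 variables. Let I_W ⊂ S be the ideal generated by g₁ = ax+by, g₂ = az+bt+cx+dy, g₃ = cz+dt, and set Δ₁ = ad−bc, Δ₂ = xt−yz. Then Δ₁Δ₂ − (az−cx)² ∉ I_W, even though Δ₁·(Δ₁Δ₂ − (az−cx)²) ∈ I_W. -/
import Mathlib


open MvPolynomial

/-- In the polynomial ring `S = K[a,b,c,d,x,y,z,t]` over a
field of characteristic `≠ 2`, with `I_W = (ax+by, az+bt+cx+dy, cz+dt)`,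
`Δ₁ = ad−bc`, `Δ₂ = xt−yz`, the element `Δ₁Δ₂ − (az−cx)²` does NOT lie in
`I_W`, even though `Δ₁·(Δ₁Δ₂ − (az−cx)²) ∈ I_W`. -/
theorem spinor_square_relation_needs_cancellation (K : Type*) [Field K]
    (hchar : (2 : K) ≠ 0)
    (a b c d x y z t : MvPolynomial (Fin 8) K)
    (hvars : (a, b, c, d, x, y, z, t) = (X 0, X 1, X 2, X 3, X 4, X 5, X 6, X 7)) :
    (a*d - b*c) * (x*t - y*z) - (a*z - c*x)^2 ∉
      Ideal.span {a*x + b*y, a*z + b*t + c*x + d*y, c*z + d*t} ∧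
    (a*d - b*c) * ((a*d - b*c) * (x*t - y*z) - (a*z - c*x)^2) ∈
      Ideal.span {a*x + b*y, a*z + b*t + c*x + d*y, c*z + d*t} := by
  have h1 : a*x + b*y ∈ Ideal.span {a*x + b*y, a*z + b*t + c*x + d*y, c*z + d*t} :=
    Ideal.subset_span (by simp)
  have h2 : a*z + b*t + c*x + d*y ∈
      Ideal.span {a*x + b*y, a*z + b*t + c*x + d*y, c*z + d*t} :=
    Ideal.subset_span (by simp)
  have h3 : c*z + d*t ∈ Ideal.span {a*x + b*y, a*z + b*t + c*x + d*y, c*z + d*t} :=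
    Ideal.subset_span (by simp)
  constructor
  · -- non-membership via the evaluation a↦u, b↦u², z↦−u², t↦u, others ↦ 0
    intro hmem
    simp only [Prod.mk.injEq] at hvars
    obtain ⟨rfl, rfl, rfl, rfl, rfl, rfl, rfl, rfl⟩ := hvars
    set v : Fin 8 → Polynomial K :=
      ![Polynomial.X, Polynomial.X^2, 0, 0, 0, 0, -Polynomial.X^2, Polynomial.X] with hv
    have hφ := Ideal.mem_map_of_mem (aeval v).toRingHom hmem
    rw [Ideal.map_span] at hφ
    have himg : (aeval v).toRingHom '' ({X 0 * X 4 + X 1 * X 5,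
        X 0 * X 6 + X 1 * X 7 + X 2 * X 4 + X 3 * X 5, X 2 * X 6 + X 3 * X 7}
          : Set (MvPolynomial (Fin 8) K)) ⊆ {0} := by
      rintro p ⟨q, hq, rfl⟩
      simp only [Set.mem_insert_iff, Set.mem_singleton_iff] at hq
      have e0 : v 0 = Polynomial.X := rfl
      have e1 : v 1 = Polynomial.X^2 := rfl
      have e2 : v 2 = 0 := rfl
      have e3 : v 3 = 0 := rfl
      have e4 : v 4 = 0 := rfl
      have e5 : v 5 = 0 := rfl
      have e6 : v 6 = -Polynomial.X^2 := rfl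
      have e7 : v 7 = Polynomial.X := rfl
      rcases hq with rfl | rfl | rfl <;>
        · simp only [AlgHom.toRingHom_eq_coe, RingHom.coe_coe, map_add, map_mul, aeval_X,
            e0, e1, e2, e3, e4, e5, e6, e7, Set.mem_singleton_iff]
          ring
    have hle : Ideal.span ((aeval v).toRingHom '' ({X 0 * X 4 + X 1 * X 5,
        X 0 * X 6 + X 1 * X 7 + X 2 * X 4 + X 3 * X 5, X 2 * X 6 + X 3 * X 7}
          : Set (MvPolynomial (Fin 8) K)))
          ≤ Ideal.span {(0 : Polynomial K)} := Ideal.span_mono himg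
    have h0 := hle hφ
    rw [Ideal.span_singleton_eq_bot.mpr rfl, Ideal.mem_bot] at h0
    have hval : (aeval v).toRingHom
        ((X 0 * X 3 - X 1 * X 2) * (X 4 * X 7 - X 5 * X 6) - (X 0 * X 6 - X 2 * X 4)^2
          : MvPolynomial (Fin 8) K) = -(Polynomial.X : Polynomial K)^6 := by
      have e0 : v 0 = Polynomial.X := rfl
      have e1 : v 1 = Polynomial.X^2 := rfl
      have e2 : v 2 = 0 := rfl
      have e3 : v 3 = 0 := rfl
      have e4 : v 4 = 0 := rfl
      have e5 : v 5 = 0 := rfl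
      have e6 : v 6 = -Polynomial.X^2 := rfl
      have e7 : v 7 = Polynomial.X := rfl
      simp only [AlgHom.toRingHom_eq_coe, RingHom.coe_coe, map_sub, map_add, map_mul, map_pow,
        aeval_X, e0, e1, e2, e3, e4, e5, e6, e7]
      ring
    rw [hval] at h0
    have : (Polynomial.X : Polynomial K)^6 ≠ 0 := pow_ne_zero _ Polynomial.X_ne_zero
    exact this (by linear_combination -h0)
  · -- explicit membership certificate
    have key : (a*d - b*c) * ((a*d - b*c) * (x*t - y*z) - (a*z - c*x)^2) =
        (-(c^2*d*x) - 3*(b*c*d*t) - 4*(b*c^2*z) + a*d^2*t + 3*(a*c*d*z)) * (a*x + b*y)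
        + (b*c^2*x + a*b*d*t + a*b*c*z - a^2*d*z) * (a*z + b*t + c*x + d*y)
        + (3*(b^2*c*y) - 2*(a*b*d*y) - a*b^2*t) * (c*z + d*t) := by ring
    rw [key]
    exact add_mem (add_mem (Ideal.mul_mem_left _ _ h1) (Ideal.mul_mem_left _ _ h2))
      (Ideal.mul_mem_left _ _ h3)
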